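/- Let 0 ≤ γ2 ≤ γ1 ≤ π/2 with γ1 + γ2 ≤ π/2. Define x3^(1) = cos γ2 sin γ1 / (1 + cos γ1 sin γ2) and x3^(2) = cos γ2 sin γ1 / (−1 + cos γ1 sin γ2) (when the denominator is nonzero). Then −1 ≤ x3^(2) < 0 < x3^(1) < 1 whenever 0 < γ1 < π/2, and x3^(2) = −1 if and only if γ1 + γ2 = π/2. -/
import Mathlib


open Real

theorem stmt2 (γ1 γ2 : ℝ)
    (h1 : 0 ≤ γ2) (h2 : γ2 ≤ γ1) (h3 : γ1 ≤ π/2) (h4 : γ1 + γ2 ≤ π/2) :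
    let x31 := Real.cos γ2 * Real.sin γ1 / (1 + Real.cos γ1 * Real.sin γ2)
    let x32 := Real.cos γ2 * Real.sin γ1 / (-1 + Real.cos γ1 * Real.sin γ2)
    (0 < γ1 → γ1 < π/2 →
      -1 ≤ x32 ∧ x32 < 0 ∧ 0 < x31 ∧ x31 < 1) ∧
    (0 < γ1 → γ1 < π/2 → (x32 = -1 ↔ γ1 + γ2 = π/2)) := by
  intro x31 x32
  have hpi := Real.pi_pos
  constructor <;> intro hg1 hg1'
  · have hc1 : 0 < Real.cos γ1 := Real.cos_pos_of_mem_Ioo ⟨by linarith, hg1'⟩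
    have hc2 : 0 < Real.cos γ2 := Real.cos_pos_of_mem_Ioo ⟨by linarith, by linarith⟩
    have hs1 : 0 < Real.sin γ1 := Real.sin_pos_of_pos_of_lt_pi hg1 (by linarith)
    have hs2 : 0 ≤ Real.sin γ2 := Real.sin_nonneg_of_nonneg_of_le_pi h1 (by linarith)
    have hs1' : Real.sin γ1 < 1 := by nlinarith [Real.sin_sq_add_cos_sq γ1]
    have hs2' : Real.sin γ2 < 1 := by nlinarith [Real.sin_sq_add_cos_sq γ2]
    have hden1 : (0:ℝ) < 1 + Real.cos γ1 * Real.sin γ2 := by positivity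
    have hden2 : -1 + Real.cos γ1 * Real.sin γ2 < 0 := by
      nlinarith [Real.cos_le_one γ1]
    have hle : Real.sin (γ1 + γ2) ≤ 1 := Real.sin_le_one _
    rw [Real.sin_add] at hle
    refine ⟨?_, ?_, ?_, ?_⟩
    · rw [show x32 = Real.cos γ2 * Real.sin γ1 / (-1 + Real.cos γ1 * Real.sin γ2) from rfl,
        le_div_iff_of_neg hden2]
      nlinarith
    · exact div_neg_of_pos_of_neg (mul_pos hc2 hs1) hden2
    · exact div_pos (mul_pos hc2 hs1) hden1
    · rw [show x31 = Real.cos γ2 * Real.sin γ1 / (1 + Real.cos γ1 * Real.sin γ2) from rfl,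
        div_lt_one hden1]
      nlinarith [Real.cos_le_one γ2, mul_nonneg hc1.le hs2]
  · have hc1 : 0 < Real.cos γ1 := Real.cos_pos_of_mem_Ioo ⟨by linarith, hg1'⟩
    have hc2 : 0 < Real.cos γ2 := Real.cos_pos_of_mem_Ioo ⟨by linarith, by linarith⟩
    have hs2 : 0 ≤ Real.sin γ2 := Real.sin_nonneg_of_nonneg_of_le_pi h1 (by linarith)
    have hs2' : Real.sin γ2 < 1 := by nlinarith [Real.sin_sq_add_cos_sq γ2]
    have hden2 : -1 + Real.cos γ1 * Real.sin γ2 < 0 := by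
      nlinarith [Real.cos_le_one γ1]
    have hs : Real.sin (γ1 + γ2) = Real.sin γ1 * Real.cos γ2 + Real.cos γ1 * Real.sin γ2 :=
      Real.sin_add γ1 γ2
    constructor
    · intro h
      rw [show x32 = Real.cos γ2 * Real.sin γ1 / (-1 + Real.cos γ1 * Real.sin γ2) from rfl,
        div_eq_iff hden2.ne] at h
      have hsin1 : Real.sin (γ1 + γ2) = 1 := by rw [hs]; nlinarith
      exact Real.injOn_sin (Set.mem_Icc.mpr ⟨by linarith, h4⟩)
        (Set.mem_Icc.mpr ⟨by linarith, le_refl _⟩)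
        (by rw [hsin1, Real.sin_pi_div_two])
    · intro h
      have hsin1 : Real.sin (γ1 + γ2) = 1 := by rw [h, Real.sin_pi_div_two]
      rw [show x32 = Real.cos γ2 * Real.sin γ1 / (-1 + Real.cos γ1 * Real.sin γ2) from rfl,
        div_eq_iff hden2.ne]
      nlinarith
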